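/- With E(N, a₁, a₂) as the twist-untwist empirical error formula, if a_j = c_j/N^α with α > 1/2 and c₂ ≠ 0, then N²·E(N, c₁/N^α, c₂/N^α) → ∞ as N → ∞. -/

import Mathlib

open Real Filter

/-- Empirical (method-of-moments) error at φ = 0 of the generalized protocol. -/
noncomputable def E (N : ℕ) (a₁ a₂ : ℝ) : ℝ :=
  (2 * ((N : ℝ) + 1) - 2 * ((N : ℝ) - 1) * Real.cos (2 * (a₁ + a₂)) ^ (N - 2)) /
    ((N : ℝ) * ((N : ℝ) - 1) ^ 2 * Real.sin a₂ ^ 2 *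
      (Real.cos a₂ ^ (N - 2) + Real.cos (2 * a₁ + a₂) ^ (N - 2)) ^ 2)

/-- If a_j = c_j/N^α with α > 1/2 and c₁ < 0 < c₂, then N²·E(N, a₁, a₂) → ∞. -/
theorem stmt_8 (α c₁ c₂ : ℝ) (hα : 1 / 2 < α) (hc₁ : c₁ < 0) (hc₂ : 0 < c₂) :
    Tendsto (fun N : ℕ =>
        (N : ℝ) ^ 2 * E N (c₁ / (N : ℝ) ^ α) (c₂ / (N : ℝ) ^ α))
      atTop atTop := by
  have hα0 : 0 < α := by linarith
  have hpow : Tendsto (fun N : ℕ => (N : ℝ) ^ α) atTop atTop :=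
    (tendsto_rpow_atTop hα0).comp tendsto_natCast_atTop_atTop
  have hg : Tendsto (fun N : ℕ => (N : ℝ) ^ (2 * α - 1) / c₂ ^ 2) atTop atTop :=
    ((tendsto_rpow_atTop (by linarith)).comp tendsto_natCast_atTop_atTop).atTop_div_const
      (by positivity)
  refine tendsto_atTop_mono' atTop ?_ hg
  filter_upwards [eventually_ge_atTop 2,
    hpow.eventually_ge_atTop (max 1 (max c₂ |2 * c₁ + c₂|))] with N hN2 hPbig
  simp only [E]
  have hNR : (2 : ℝ) ≤ (N : ℝ) := by exact_mod_cast hN2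
  have hN0 : (0 : ℝ) < (N : ℝ) := by linarith
  set P : ℝ := (N : ℝ) ^ α with hPdef
  have hP1 : (1 : ℝ) ≤ P := le_trans (le_max_left _ _) hPbig
  have hP0 : (0 : ℝ) < P := by linarith
  set x : ℝ := c₂ / P with hxdef
  have hx0 : 0 < x := div_pos hc₂ hP0
  have hx1 : x ≤ 1 := (div_le_one hP0).2 (le_trans (le_trans (le_max_left _ _) (le_max_right _ _)) hPbig)
  have hyeq : 2 * (c₁ / P) + c₂ / P = (2 * c₁ + c₂) / P := by ring
  have hy1 : |2 * (c₁ / P) + c₂ / P| ≤ 1 := by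
    rw [hyeq, abs_div, abs_of_pos hP0]
    exact (div_le_one hP0).2 (le_trans (le_trans (le_max_right _ _) (le_max_right _ _)) hPbig)
  have hpi : (3 : ℝ) < Real.pi := Real.pi_gt_three
  have hcx : 0 < Real.cos x :=
    Real.cos_pos_of_mem_Ioo ⟨by linarith, by linarith⟩
  have hcy : 0 < Real.cos (2 * (c₁ / P) + c₂ / P) := by
    rcases abs_le.1 hy1 with ⟨h1, h2⟩
    exact Real.cos_pos_of_mem_Ioo ⟨by linarith, by linarith⟩
  have hsx : 0 < Real.sin x :=
    Real.sin_pos_of_pos_of_lt_pi hx0 (by linarith)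
  -- numerator lower bound
  have ht : Real.cos (2 * (c₁ / P + c₂ / P)) ^ (N - 2) ≤ 1 := by
    calc Real.cos (2 * (c₁ / P + c₂ / P)) ^ (N - 2)
        ≤ |Real.cos (2 * (c₁ / P + c₂ / P)) ^ (N - 2)| := le_abs_self _
      _ = |Real.cos (2 * (c₁ / P + c₂ / P))| ^ (N - 2) := abs_pow _ _
      _ ≤ 1 := pow_le_one₀ (abs_nonneg _) (Real.abs_cos_le_one _)
  have hnum : 4 ≤ 2 * ((N : ℝ) + 1) - 2 * ((N : ℝ) - 1) *
      Real.cos (2 * (c₁ / P + c₂ / P)) ^ (N - 2) := by nlinarith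
  -- denominator bounds
  set D : ℝ := (N : ℝ) * ((N : ℝ) - 1) ^ 2 * Real.sin x ^ 2 *
      (Real.cos x ^ (N - 2) + Real.cos (2 * (c₁ / P) + c₂ / P) ^ (N - 2)) ^ 2 with hDdef
  have hcxp : 0 < Real.cos x ^ (N - 2) := pow_pos hcx _
  have hcyp : 0 < Real.cos (2 * (c₁ / P) + c₂ / P) ^ (N - 2) := pow_pos hcy _
  have hD0 : 0 < D := by
    apply mul_pos (mul_pos (mul_pos hN0 (by nlinarith)) (by positivity))
    positivity
  have hcx1 : Real.cos x ^ (N - 2) ≤ 1 := pow_le_one₀ hcx.le (Real.cos_le_one x)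
  have hcy1 : Real.cos (2 * (c₁ / P) + c₂ / P) ^ (N - 2) ≤ 1 :=
    pow_le_one₀ hcy.le (Real.cos_le_one _)
  have hsinle : Real.sin x ^ 2 ≤ x ^ 2 :=
    pow_le_pow_left₀ hsx.le (Real.sin_le hx0.le) 2
  have hDle : D ≤ 4 * (N : ℝ) ^ 3 * x ^ 2 := by
    have hstep : D ≤ (N : ℝ) * (N : ℝ) ^ 2 * x ^ 2 * 2 ^ 2 := by
      rw [hDdef]
      gcongr <;> first | exact Real.sin_le hx0.le | linarith
    calc D ≤ (N : ℝ) * (N : ℝ) ^ 2 * x ^ 2 * 2 ^ 2 := hstep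
      _ = 4 * (N : ℝ) ^ 3 * x ^ 2 := by ring
  -- key equality
  have hP2 : P ^ 2 = (N : ℝ) ^ (2 * α - 1) * (N : ℝ) := by
    rw [hPdef, ← Real.rpow_natCast ((N : ℝ) ^ α) 2, ← Real.rpow_mul hN0.le,
      show α * ((2 : ℕ) : ℝ) = (2 * α - 1) + 1 by push_cast; ring,
      Real.rpow_add hN0, Real.rpow_one]
  have hkey : (N : ℝ) ^ (2 * α - 1) / c₂ ^ 2 = (N : ℝ) ^ 2 * (4 / (4 * (N : ℝ) ^ 3 * x ^ 2)) := by
    have hx2 : x ^ 2 = c₂ ^ 2 / P ^ 2 := by rw [hxdef, div_pow]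
    rw [hx2]
    have h1 : (N : ℝ) ^ 2 * (4 / (4 * (N : ℝ) ^ 3 * (c₂ ^ 2 / P ^ 2))) =
        P ^ 2 / ((N : ℝ) * c₂ ^ 2) := by
      field_simp
    rw [h1, hP2, mul_comm ((N : ℝ) ^ (2 * α - 1)) (N : ℝ), mul_div_mul_left _ _ hN0.ne']
  calc (N : ℝ) ^ (2 * α - 1) / c₂ ^ 2
      = (N : ℝ) ^ 2 * (4 / (4 * (N : ℝ) ^ 3 * x ^ 2)) := hkey
    _ ≤ (N : ℝ) ^ 2 * (4 / D) := by gcongr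
    _ ≤ (N : ℝ) ^ 2 * ((2 * ((N : ℝ) + 1) - 2 * ((N : ℝ) - 1) *
          Real.cos (2 * (c₁ / P + c₂ / P)) ^ (N - 2)) / D) := by gcongr
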